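/- Define a : ℕ → ℝ by a = sup_{n≥0} 2^(-2^(3n)) χ_{[0, 2^(2^(3n)))} and a₀ : ℕ → ℝ by a₀ = sup_{n≥0} 2^(-2^(3(n+1))) χ_{[0, 2^(3n+2^(3n)))}. Then for every l ≥ 0, the pointwise inequality σ_{2^l} a₀ ≤ σ_{2^l}(sup_{0≤n<l} 2^(-2^(3(n+1))) χ_{[0, 2^(3n+2^(3n)))}) + a holds, where (σ_M z)(k) = z(⌊k/M⌋). -/

import Mathlib

/-- The dilation `(σ_M x)(k) = x(⌊k/M⌋)`. -/
def dil (M : ℕ) (x : ℕ → ℝ) (k : ℕ) : ℝ := x (k / M)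

/-- The sequence `a = sup_{n ≥ 0} 2^(-2^(3n)) χ_{[0, 2^(2^(3n)))}`. -/
noncomputable def seqA (k : ℕ) : ℝ :=
  ⨆ n : ℕ, if k < 2 ^ 2 ^ (3 * n) then ((2 : ℝ) ^ 2 ^ (3 * n))⁻¹ else 0

/-- The sequence `a₀ = sup_{n ≥ 0} 2^(-2^(3(n+1))) χ_{[0, 2^(3n + 2^(3n)))}`. -/
noncomputable def seqA0 (k : ℕ) : ℝ :=
  ⨆ n : ℕ, if k < 2 ^ (3 * n + 2 ^ (3 * n)) then ((2 : ℝ) ^ 2 ^ (3 * (n + 1)))⁻¹ else 0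

/-- The truncated sequence `sup_{0 ≤ n < l} 2^(-2^(3(n+1))) χ_{[0, 2^(3n + 2^(3n)))}`. -/
noncomputable def seqA0trunc (l : ℕ) (k : ℕ) : ℝ :=
  ⨆ n : ℕ, if n < l ∧ k < 2 ^ (3 * n + 2 ^ (3 * n)) then ((2 : ℝ) ^ 2 ^ (3 * (n + 1)))⁻¹ else 0

lemma bddA (k : ℕ) : BddAbove (Set.range fun n : ℕ =>
    if k < 2 ^ 2 ^ (3 * n) then ((2 : ℝ) ^ 2 ^ (3 * n))⁻¹ else 0) := by
  refine ⟨1, ?_⟩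
  rintro x ⟨n, rfl⟩
  dsimp only
  split
  · exact inv_le_one_of_one_le₀ (one_le_pow₀ one_le_two)
  · norm_num

lemma bddT (l k : ℕ) : BddAbove (Set.range fun n : ℕ =>
    if n < l ∧ k < 2 ^ (3 * n + 2 ^ (3 * n)) then ((2 : ℝ) ^ 2 ^ (3 * (n + 1)))⁻¹ else 0) := by
  refine ⟨1, ?_⟩
  rintro x ⟨n, rfl⟩
  dsimp only
  split
  · exact inv_le_one_of_one_le₀ (one_le_pow₀ one_le_two)
  · norm_num

lemma seqA_nonneg (k : ℕ) : 0 ≤ seqA k :=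
  Real.iSup_nonneg fun n => by split <;> positivity

lemma trunc_nonneg (l k : ℕ) : 0 ≤ seqA0trunc l k :=
  Real.iSup_nonneg fun n => by split <;> positivity

/-- For every `l ≥ 0`, `σ_{2^l} a₀ ≤ σ_{2^l}(sup_{0 ≤ n < l} 2^(-2^(3(n+1))) χ_{[0, 2^(3n+2^(3n)))}) + a`
pointwise. -/
theorem stmt_13 :
    ∀ l : ℕ, ∀ k : ℕ,
      dil (2 ^ l) seqA0 k ≤ dil (2 ^ l) (seqA0trunc l) k + seqA k := by
  intro l k
  have hT := trunc_nonneg l (k / 2 ^ l)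
  have hA := seqA_nonneg k
  show seqA0 (k / 2 ^ l) ≤ seqA0trunc l (k / 2 ^ l) + seqA k
  unfold seqA0
  apply ciSup_le
  intro n
  by_cases hc : k / 2 ^ l < 2 ^ (3 * n + 2 ^ (3 * n))
  · rw [if_pos hc]
    rcases lt_or_ge n l with hnl | hln
    · have h1 : ((2 : ℝ) ^ 2 ^ (3 * (n + 1)))⁻¹ ≤ seqA0trunc l (k / 2 ^ l) := by
        unfold seqA0trunc
        have := le_ciSup (bddT l (k / 2 ^ l)) n
        rwa [if_pos ⟨hnl, hc⟩] at this
      linarith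
    · have hk : k < 2 ^ 2 ^ (3 * (n + 1)) := by
        have h2 : k < 2 ^ (3 * n + 2 ^ (3 * n)) * 2 ^ l :=
          (Nat.div_lt_iff_lt_mul (pow_pos (by norm_num : (0:ℕ) < 2) l)).mp hc
        have h3 : 3 * n + 2 ^ (3 * n) + l ≤ 2 ^ (3 * (n + 1)) := by
          have h8 : 2 ^ (3 * (n + 1)) = 8 * 2 ^ (3 * n) := by
            rw [show 3 * (n + 1) = 3 * n + 3 by ring, pow_add]; ring
          have hn : n < 2 ^ (3 * n) :=
            lt_of_lt_of_le (Nat.lt_two_pow_self (n := n)) (Nat.pow_le_pow_right (by norm_num) (by omega))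
          omega
        calc k < 2 ^ (3 * n + 2 ^ (3 * n) + l) := by rw [pow_add]; exact h2
          _ ≤ 2 ^ 2 ^ (3 * (n + 1)) := Nat.pow_le_pow_right (by norm_num) h3
      have h1 : ((2 : ℝ) ^ 2 ^ (3 * (n + 1)))⁻¹ ≤ seqA k := by
        unfold seqA
        have := le_ciSup (bddA k) (n + 1)
        rwa [if_pos hk] at this
      linarith
  · rw [if_neg hc]
    linarith
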